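/- Let E be a real Hilbert space and f : E → ℝ a convex differentiable L-smooth function. Then for every γ > 0 and all x, y ∈ E: ‖(x − γ∇f(x)) − (y − γ∇f(y))‖² ≤ ‖x − y‖² − γ(2/L − γ)‖∇f(x) − ∇f(y)‖². -/

import Mathlib

open InnerProductSpace

local notation "⟪" x ", " y "⟫" => @inner ℝ _ _ x y

section Aux

variable {E : Type*} [NormedAddCommGroup E] [InnerProductSpace ℝ E] [CompleteSpace E]
  {f : E → ℝ} {f' : E → E} {L : ℝ}

lemma aux_line_hasDerivAt (hdiff : ∀ x, HasGradientAt f (f' x) x) (a v : E) (t : ℝ) :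
    HasDerivAt (fun s : ℝ => f (a + s • v)) ⟪f' (a + t • v), v⟫ t := by
  have h1 : HasDerivAt (fun s : ℝ => a + s • v) v t := by
    simpa using ((hasDerivAt_id t).smul_const v).const_add a
  have h2 := (hasGradientAt_iff_hasFDerivAt.mp (hdiff (a + t • v))).comp_hasDerivAt t h1
  simp at h2
  exact h2

lemma aux_convex_lb (hdiff : ∀ x, HasGradientAt f (f' x) x)
    (hconv : ConvexOn ℝ Set.univ f) (a b : E) :
    f a + ⟪f' a, b - a⟫ ≤ f b := by
  have hg : ConvexOn ℝ Set.univ (fun t : ℝ => f (a + t • (b - a))) := by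
    have h := hconv.comp_affineMap (AffineMap.lineMap a b)
    have he : (fun t : ℝ => f (a + t • (b - a))) = f ∘ (AffineMap.lineMap a b) := by
      funext t
      simp [AffineMap.lineMap_apply]
      congr 1
      abel
    rw [he]
    simpa using h
  have hd : HasDerivAt (fun t : ℝ => f (a + t • (b - a))) ⟪f' a, b - a⟫ 0 := by
    have := aux_line_hasDerivAt hdiff a (b - a) 0
    simpa using this
  have hs := hg.le_slope_of_hasDerivAt (Set.mem_univ (0:ℝ)) (Set.mem_univ (1:ℝ)) one_pos hd
  simp [slope_def_field] at hs
  linarith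

lemma aux_descent (hdiff : ∀ x, HasGradientAt f (f' x) x)
    (hsmooth : ∀ x y, ‖f' x - f' y‖ ≤ L * ‖x - y‖) (hL : 0 < L) (a b : E) :
    f b ≤ f a + ⟪f' a, b - a⟫ + L / 2 * ‖b - a‖ ^ 2 := by
  set v := b - a with hv
  set h : ℝ → ℝ := fun t => f a + t * ⟪f' a, v⟫ + L / 2 * t ^ 2 * ‖v‖ ^ 2 - f (a + t • v)
    with hh
  have hderiv : ∀ t : ℝ,
      HasDerivAt h (⟪f' a, v⟫ + L * t * ‖v‖ ^ 2 - ⟪f' (a + t • v), v⟫) t := by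
    intro t
    have h1 := aux_line_hasDerivAt hdiff a v t
    have hA : HasDerivAt (fun t : ℝ => t * ⟪f' a, v⟫) ⟪f' a, v⟫ t := by
      simpa using (hasDerivAt_id t).mul_const ⟪f' a, v⟫
    have hB : HasDerivAt (fun t : ℝ => L / 2 * t ^ 2 * ‖v‖ ^ 2) (L * t * ‖v‖ ^ 2) t := by
      have := ((hasDerivAt_pow 2 t).const_mul (L / 2)).mul_const (‖v‖ ^ 2)
      exact this.congr_deriv (by ring)
    have := (((hasDerivAt_const t (f a)).add hA).add hB).sub h1
    exact this.congr_deriv (by ring)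
  have hnonneg : ∀ t ∈ Set.Ioo (0:ℝ) 1, 0 ≤ deriv h t := by
    intro t ht
    rw [(hderiv t).deriv]
    have hin : ⟪f' (a + t • v) - f' a, v⟫ ≤ L * t * ‖v‖ ^ 2 := by
      calc ⟪f' (a + t • v) - f' a, v⟫ ≤ ‖f' (a + t • v) - f' a‖ * ‖v‖ :=
            real_inner_le_norm _ _
        _ ≤ (L * ‖(a + t • v) - a‖) * ‖v‖ :=
            mul_le_mul_of_nonneg_right (hsmooth _ _) (norm_nonneg _)
        _ = L * t * ‖v‖ ^ 2 := by
            rw [add_sub_cancel_left, norm_smul, Real.norm_eq_abs, abs_of_pos ht.1]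
            ring
    rw [inner_sub_left] at hin
    linarith
  have hdiffble : Differentiable ℝ h := fun t => (hderiv t).differentiableAt
  have hmono := monotoneOn_of_deriv_nonneg (convex_Icc (0:ℝ) 1)
    hdiffble.continuous.continuousOn
    (fun t _ => (hdiffble t).differentiableWithinAt)
    (by rwa [interior_Icc])
  have := hmono (Set.left_mem_Icc.mpr zero_le_one) (Set.right_mem_Icc.mpr zero_le_one)
    zero_le_one
  have h0 : h 0 = 0 := by simp [hh]
  have h1 : h 1 = f a + ⟪f' a, v⟫ + L / 2 * ‖v‖ ^ 2 - f b := by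
    simp [hh, hv]
  rw [h0, h1] at this
  linarith

lemma aux_bregman (hdiff : ∀ x, HasGradientAt f (f' x) x)
    (hconv : ConvexOn ℝ Set.univ f)
    (hsmooth : ∀ x y, ‖f' x - f' y‖ ≤ L * ‖x - y‖) (hL : 0 < L) (x y : E) :
    f x + ⟪f' x, y - x⟫ + 1 / (2 * L) * ‖f' y - f' x‖ ^ 2 ≤ f y := by
  set g := f' y - f' x with hg
  set w := y - (1 / L) • g with hw
  have h1 := aux_convex_lb hdiff hconv x w
  have h2 := aux_descent hdiff hsmooth hL y w
  have e1 : w - x = (y - x) - (1 / L) • g := by rw [hw]; abel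
  have e2 : w - y = -((1 / L) • g) := by rw [hw]; abel
  have i1 : ⟪f' x, w - x⟫ = ⟪f' x, y - x⟫ - (1 / L) * ⟪f' x, g⟫ := by
    rw [e1, inner_sub_right, real_inner_smul_right]
  have i2 : ⟪f' y, w - y⟫ = -((1 / L) * ⟪f' y, g⟫) := by
    rw [e2, inner_neg_right, real_inner_smul_right]
  have i3 : ‖w - y‖ ^ 2 = (1 / L) ^ 2 * ‖g‖ ^ 2 := by
    rw [e2, norm_neg, norm_smul, Real.norm_eq_abs, abs_of_pos (by positivity : (0:ℝ) < 1 / L)]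
    ring
  have i4 : ⟪f' y, g⟫ - ⟪f' x, g⟫ = ‖g‖ ^ 2 := by
    rw [← inner_sub_left, ← hg, real_inner_self_eq_norm_sq]
  rw [i1] at h1
  rw [i2, i3] at h2
  have hL' : L ≠ 0 := ne_of_gt hL
  have key : L / 2 * ((1 / L) ^ 2 * ‖g‖ ^ 2) = 1 / (2 * L) * ‖g‖ ^ 2 := by
    field_simp
  rw [key] at h2
  have i4' : 1 / L * ⟪f' y, g⟫ - 1 / L * ⟪f' x, g⟫ = 1 / L * ‖g‖ ^ 2 := by
    rw [← mul_sub, i4]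
  have e5 : 1 / L * ‖g‖ ^ 2 = 2 * (1 / (2 * L) * ‖g‖ ^ 2) := by
    field_simp
  linarith

lemma aux_cocoercive (hdiff : ∀ x, HasGradientAt f (f' x) x)
    (hconv : ConvexOn ℝ Set.univ f)
    (hsmooth : ∀ x y, ‖f' x - f' y‖ ≤ L * ‖x - y‖) (hL : 0 < L) (x y : E) :
    1 / L * ‖f' x - f' y‖ ^ 2 ≤ ⟪x - y, f' x - f' y⟫ := by
  have h1 := aux_bregman hdiff hconv hsmooth hL x y
  have h2 := aux_bregman hdiff hconv hsmooth hL y x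
  have e1 : ⟪f' x, y - x⟫ + ⟪f' y, x - y⟫ = -⟪x - y, f' x - f' y⟫ := by
    simp only [inner_sub_left, inner_sub_right]
    have c1 : ⟪f' x, y⟫ = ⟪y, f' x⟫ := real_inner_comm _ _
    have c2 : ⟪f' x, x⟫ = ⟪x, f' x⟫ := real_inner_comm _ _
    have c3 : ⟪f' y, x⟫ = ⟪x, f' y⟫ := real_inner_comm _ _
    have c4 : ⟪f' y, y⟫ = ⟪y, f' y⟫ := real_inner_comm _ _
    linarith
  have e2 : ‖f' y - f' x‖ = ‖f' x - f' y‖ := norm_sub_rev _ _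
  rw [e2] at h1
  have e3 : 1 / L * ‖f' x - f' y‖ ^ 2 = 2 * (1 / (2 * L) * ‖f' x - f' y‖ ^ 2) := by
    field_simp
  linarith

end Aux

/-- cocoercivity-type inequality for the gradient step of a convex
`L`-smooth function on a real Hilbert space, for an arbitrary stepsize `γ > 0`. -/
theorem dave_rpg_convex_gradient_step_inequality
    {E : Type*} [NormedAddCommGroup E] [InnerProductSpace ℝ E] [CompleteSpace E]
    (f : E → ℝ) (f' : E → E) (L : ℝ)
    (hdiff : ∀ x, HasGradientAt f (f' x) x)
    (hconv : ConvexOn ℝ Set.univ f)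
    (hsmooth : ∀ x y, ‖f' x - f' y‖ ≤ L * ‖x - y‖)
    (γ : ℝ) (hγ : 0 < γ) (x y : E) :
    ‖x - γ • f' x - (y - γ • f' y)‖ ^ 2 ≤
      ‖x - y‖ ^ 2 - γ * (2 / L - γ) * ‖f' x - f' y‖ ^ 2 := by
  rcases le_or_gt L 0 with hL | hL
  · -- degenerate case: the gradient is constant
    have hd0 : f' x = f' y := by
      by_cases hxy : x = y
      · rw [hxy]
      · have h := hsmooth x y
        have : ‖f' x - f' y‖ ≤ 0 :=
          h.trans (mul_nonpos_of_nonpos_of_nonneg hL (norm_nonneg _))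
        have := le_antisymm this (norm_nonneg _)
        rw [norm_eq_zero, sub_eq_zero] at this
        exact this
    rw [hd0]
    have e : x - γ • f' y - (y - γ • f' y) = x - y := by abel
    rw [e]
    simp
  · -- main case
    have hco := aux_cocoercive hdiff hconv hsmooth hL x y
    have e : x - γ • f' x - (y - γ • f' y) = (x - y) - γ • (f' x - f' y) := by
      rw [smul_sub]; abel
    rw [e]
    have hexp : ‖(x - y) - γ • (f' x - f' y)‖ ^ 2 =
        ‖x - y‖ ^ 2 - 2 * (γ * ⟪x - y, f' x - f' y⟫) + γ ^ 2 * ‖f' x - f' y‖ ^ 2 := by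
      rw [norm_sub_sq_real, real_inner_smul_right, norm_smul, Real.norm_eq_abs,
        abs_of_pos hγ]
      ring
    rw [hexp]
    have hmul := mul_le_mul_of_nonneg_left hco hγ.le
    have e4 : γ * (2 / L - γ) * ‖f' x - f' y‖ ^ 2 =
        2 * (γ * (1 / L * ‖f' x - f' y‖ ^ 2)) - γ ^ 2 * ‖f' x - f' y‖ ^ 2 := by
      field_simp
    linarith [hmul, e4]
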